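/- arXiv:2601.17968 — 4 statements merged into one kernel-verified Lean document; each statement's English description precedes it below -/
import Mathlib

section
/- There exists a constant M > 0 such that for every continuously differentiable function f : ℝ² → ℝ with compact support, ‖f‖_{L⁴(ℝ²)} ≤ M · ‖f‖_{L²(ℝ²)}^{1/2} · (‖f‖_{L²(ℝ²)}² + ‖∇f‖_{L²(ℝ²)}²)^{1/4}. -/
open MeasureTheory

theorem ofReal_norm_eq_coe_nnnorm {E : Type*} [SeminormedAddCommGroup E] (a : E) :
    ENNReal.ofReal ‖a‖ = ((‖a‖₊ : NNReal) : ENNReal) :=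
  ENNReal.ofReal_eq_coe_nnreal _

/-- Two-dimensional Gagliardo–Nirenberg (Ladyzhenskaya) interpolation inequality
`‖f‖_{L⁴} ≤ M ‖f‖_{L²}^{1/2} ‖f‖_{H¹}^{1/2}` for compactly supported `C¹` functions on `ℝ²`. -/
theorem stmt_0 :
    ∃ M : ℝ, 0 < M ∧
      ∀ f : EuclideanSpace ℝ (Fin 2) → ℝ,
        ContDiff ℝ 1 f → HasCompactSupport f →
        (∫ x, |f x| ^ 4) ^ ((1 : ℝ) / 4) ≤
          M * ((∫ x, |f x| ^ 2) ^ ((1 : ℝ) / 2)) ^ ((1 : ℝ) / 2) *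
            ((∫ x, |f x| ^ 2) + ∫ x, ‖fderiv ℝ f x‖ ^ 2) ^ ((1 : ℝ) / 4) := by
  classical
  set C : NNReal :=
    lintegralPowLePowLIntegralFDerivConst (volume : Measure (EuclideanSpace ℝ (Fin 2))) 2 with hCdef
  refine ⟨(4 * (C : ℝ)) ^ ((1 : ℝ)/4) + 1, by positivity, ?_⟩
  intro f hf h2f
  have hfc : Continuous f := hf.continuous
  have hDfc : Continuous (fderiv ℝ f) := hf.continuous_fderiv one_ne_zero
  -- integrability
  have hsupp2 : HasCompactSupport (fun x => |f x| ^ 2) :=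
    h2f.comp_left (g := fun t : ℝ => |t| ^ 2) (by simp)
  have hsupp4 : HasCompactSupport (fun x => |f x| ^ 4) :=
    h2f.comp_left (g := fun t : ℝ => |t| ^ 4) (by simp)
  have hsuppD : HasCompactSupport (fun x => ‖fderiv ℝ f x‖ ^ 2) :=
    (h2f.fderiv ℝ).comp_left (g := fun t => ‖t‖ ^ 2) (by simp)
  have ia : Integrable (fun x => |f x| ^ 2) :=
    ((hfc.abs.pow 2)).integrable_of_hasCompactSupport hsupp2
  have ic : Integrable (fun x => |f x| ^ 4) :=
    ((hfc.abs.pow 4)).integrable_of_hasCompactSupport hsupp4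
  have ib : Integrable (fun x => ‖fderiv ℝ f x‖ ^ 2) :=
    ((hDfc.norm.pow 2)).integrable_of_hasCompactSupport hsuppD
  set a : ℝ := ∫ x, |f x| ^ 2 with ha
  set b : ℝ := ∫ x, ‖fderiv ℝ f x‖ ^ 2 with hb
  set c : ℝ := ∫ x, |f x| ^ 4 with hc
  have ha0 : 0 ≤ a := integral_nonneg fun x => by positivity
  have hb0 : 0 ≤ b := integral_nonneg fun x => by positivity
  have hc0 : 0 ≤ c := integral_nonneg fun x => by positivity
  -- Sobolev inequality applied to f²
  have hg : ContDiff ℝ 1 (fun x => f x * f x) := hf.mul hf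
  have h2g : HasCompactSupport (fun x => f x * f x) := h2f.mul_left
  have hp : Real.HolderConjugate (Module.finrank ℝ (EuclideanSpace ℝ (Fin 2))) 2 := by
    have : Module.finrank ℝ (EuclideanSpace ℝ (Fin 2)) = 2 := by
      simp [finrank_euclideanSpace]
    rw [this]
    exact Real.holderConjugate_iff.mpr ⟨by norm_num, by norm_num⟩
  have main := lintegral_pow_le_pow_lintegral_fderiv
    (volume : Measure (EuclideanSpace ℝ (Fin 2))) hg h2g hp
  rw [← hCdef] at main
  -- rewrite the left side
  have hL : ∀ x, ((‖f x * f x‖₊ : ENNReal)) ^ (2 : ℝ) = ENNReal.ofReal (|f x| ^ 4) := by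
    intro x
    rw [← ofReal_norm_eq_coe_nnnorm, ENNReal.ofReal_rpow_of_nonneg (norm_nonneg _) (by norm_num)]
    congr 1
    rw [show (2:ℝ) = ((2:ℕ):ℝ) by norm_num, Real.rpow_natCast, Real.norm_eq_abs, abs_mul]
    ring
  -- pointwise bound on the derivative of f²
  have hD : ∀ x, ((‖fderiv ℝ (fun y => f y * f y) x‖₊ : ENNReal))
      ≤ 2 * (‖f x‖₊ : ENNReal) * (‖fderiv ℝ f x‖₊ : ENNReal) := by
    intro x
    have hdx : DifferentiableAt ℝ f x := (hf.differentiable one_ne_zero) x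
    have : fderiv ℝ (fun y => f y * f y) x = f x • fderiv ℝ f x + f x • fderiv ℝ f x :=
      fderiv_mul hdx hdx
    calc ((‖fderiv ℝ (fun y => f y * f y) x‖₊ : ENNReal))
        = ENNReal.ofReal ‖f x • fderiv ℝ f x + f x • fderiv ℝ f x‖ := by
          rw [this, ofReal_norm_eq_coe_nnnorm]
      _ ≤ ENNReal.ofReal (2 * (‖f x‖ * ‖fderiv ℝ f x‖)) := by
          apply ENNReal.ofReal_le_ofReal
          calc ‖f x • fderiv ℝ f x + f x • fderiv ℝ f x‖
              ≤ ‖f x • fderiv ℝ f x‖ + ‖f x • fderiv ℝ f x‖ := norm_add_le _ _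
            _ = 2 * (‖f x‖ * ‖fderiv ℝ f x‖) := by rw [norm_smul]; ring
      _ = 2 * (‖f x‖₊ : ENNReal) * (‖fderiv ℝ f x‖₊ : ENNReal) := by
          rw [ENNReal.ofReal_mul (by norm_num), ENNReal.ofReal_mul (norm_nonneg _),
            ofReal_norm_eq_coe_nnnorm, ofReal_norm_eq_coe_nnnorm]
          norm_num [mul_assoc]
  -- Cauchy–Schwarz
  have hCS := ENNReal.lintegral_mul_le_Lp_mul_Lq (volume : Measure (EuclideanSpace ℝ (Fin 2)))
    (Real.holderConjugate_iff (p := 2) (q := 2) |>.mpr ⟨one_lt_two, by norm_num⟩)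
    (f := fun x => (‖f x‖₊ : ENNReal)) (g := fun x => (‖fderiv ℝ f x‖₊ : ENNReal))
    (hfc.nnnorm.aemeasurable.coe_nnreal_ennreal)
    (hDfc.nnnorm.aemeasurable.coe_nnreal_ennreal)
  -- identify the ENNReal integrals with ofReal of real integrals
  have hA : (∫⁻ x, (‖f x‖₊ : ENNReal) ^ (2 : ℝ)) = ENNReal.ofReal a := by
    rw [ha, ofReal_integral_eq_lintegral_ofReal ia (Filter.Eventually.of_forall fun x => by positivity)]
    congr 1; ext x
    rw [← ofReal_norm_eq_coe_nnnorm, ENNReal.ofReal_rpow_of_nonneg (norm_nonneg _) (by norm_num)]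
    congr 1
    rw [show (2:ℝ) = ((2:ℕ):ℝ) by norm_num, Real.rpow_natCast, Real.norm_eq_abs]
  have hB : (∫⁻ x, (‖fderiv ℝ f x‖₊ : ENNReal) ^ (2 : ℝ)) = ENNReal.ofReal b := by
    rw [hb, ofReal_integral_eq_lintegral_ofReal ib (Filter.Eventually.of_forall fun x => by positivity)]
    congr 1; ext x
    rw [← ofReal_norm_eq_coe_nnnorm, ENNReal.ofReal_rpow_of_nonneg (norm_nonneg _) (by norm_num)]
    congr 1
    rw [show (2:ℝ) = ((2:ℕ):ℝ) by norm_num, Real.rpow_natCast]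
  -- chain of inequalities in ENNReal
  have key' : ENNReal.ofReal c ≤ (C : ENNReal) * 4 * ENNReal.ofReal a * ENNReal.ofReal b := by
    have h1 : ENNReal.ofReal c = ∫⁻ x, ((‖f x * f x‖₊ : ENNReal)) ^ (2 : ℝ) := by
      rw [hc, ofReal_integral_eq_lintegral_ofReal ic
        (Filter.Eventually.of_forall fun x => by positivity)]
      exact lintegral_congr fun x => (hL x).symm
    have h2 : (∫⁻ x, (‖fderiv ℝ (fun y => f y * f y) x‖₊ : ENNReal))
        ≤ 2 * ((ENNReal.ofReal a) ^ ((1:ℝ)/2) * (ENNReal.ofReal b) ^ ((1:ℝ)/2)) := by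
      calc (∫⁻ x, (‖fderiv ℝ (fun y => f y * f y) x‖₊ : ENNReal))
          ≤ ∫⁻ x, 2 * (‖f x‖₊ : ENNReal) * (‖fderiv ℝ f x‖₊ : ENNReal) :=
            lintegral_mono fun x => hD x
        _ = 2 * ∫⁻ x, (‖f x‖₊ : ENNReal) * (‖fderiv ℝ f x‖₊ : ENNReal) := by
            rw [← lintegral_const_mul' _ _ (by norm_num)]
            exact lintegral_congr fun x => by ring
        _ ≤ 2 * ((ENNReal.ofReal a) ^ ((1:ℝ)/2) * (ENNReal.ofReal b) ^ ((1:ℝ)/2)) := by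
            rw [← hA, ← hB]
            exact mul_le_mul_right hCS 2
    calc ENNReal.ofReal c
        = ∫⁻ x, ((‖f x * f x‖₊ : ENNReal)) ^ (2 : ℝ) := h1
      _ ≤ (C : ENNReal) * (∫⁻ x, (‖fderiv ℝ (fun y => f y * f y) x‖₊ : ENNReal)) ^ (2 : ℝ) := main
      _ ≤ (C : ENNReal) * (2 * ((ENNReal.ofReal a) ^ ((1:ℝ)/2) * (ENNReal.ofReal b) ^ ((1:ℝ)/2))) ^ (2 : ℝ) := by
          exact mul_le_mul_right (ENNReal.rpow_le_rpow h2 (by norm_num)) _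
      _ = (C : ENNReal) * 4 * ENNReal.ofReal a * ENNReal.ofReal b := by
          rw [ENNReal.mul_rpow_of_nonneg _ _ (by norm_num : (0:ℝ) ≤ 2),
            ENNReal.mul_rpow_of_nonneg _ _ (by norm_num : (0:ℝ) ≤ 2),
            ← ENNReal.rpow_mul, ← ENNReal.rpow_mul]
          norm_num
          ring
  -- back to ℝ
  have key : c ≤ 4 * (C : ℝ) * a * b := by
    have hrhs : ((C : ENNReal) * 4 * ENNReal.ofReal a * ENNReal.ofReal b)
        = ENNReal.ofReal (4 * (C : ℝ) * a * b) := by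
      rw [ENNReal.ofReal_mul (by positivity), ENNReal.ofReal_mul (by positivity),
        ENNReal.ofReal_mul (by norm_num)]
      simp [ENNReal.ofReal_coe_nnreal, mul_comm, mul_assoc, mul_left_comm]
    rw [hrhs] at key'
    exact (ENNReal.ofReal_le_ofReal_iff (by positivity)).mp key'
  -- final real arithmetic
  have h14 : (0:ℝ) ≤ 1/4 := by norm_num
  calc c ^ ((1:ℝ)/4)
      ≤ (4 * (C:ℝ) * a * b) ^ ((1:ℝ)/4) := Real.rpow_le_rpow hc0 key h14
    _ = (4 * (C:ℝ)) ^ ((1:ℝ)/4) * a ^ ((1:ℝ)/4) * b ^ ((1:ℝ)/4) := by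
        rw [Real.mul_rpow (by positivity) hb0, Real.mul_rpow (by positivity) ha0]
    _ ≤ ((4 * (C:ℝ)) ^ ((1:ℝ)/4) + 1) * a ^ ((1:ℝ)/4) * (a + b) ^ ((1:ℝ)/4) := by
        have h1 : (4 * (C:ℝ)) ^ ((1:ℝ)/4) ≤ (4 * (C:ℝ)) ^ ((1:ℝ)/4) + 1 := by linarith
        have h2 : b ^ ((1:ℝ)/4) ≤ (a + b) ^ ((1:ℝ)/4) :=
          Real.rpow_le_rpow hb0 (by linarith) h14
        have := mul_le_mul (mul_le_mul h1 (le_refl (a ^ ((1:ℝ)/4))) (by positivity)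
          (by positivity)) h2 (by positivity) (by positivity)
        linarith
    _ = ((4 * (C:ℝ)) ^ ((1:ℝ)/4) + 1) * (a ^ ((1:ℝ)/2)) ^ ((1:ℝ)/2) * (a + b) ^ ((1:ℝ)/4) := by
        rw [← Real.rpow_mul ha0]; norm_num
end

section
/- There exists a constant M > 0 such that for every continuously differentiable function f : ℝ³ → ℝ with compact support, ‖f‖_{L⁴(ℝ³)} ≤ M · ‖f‖_{L²(ℝ³)}^{1/4} · (‖f‖_{L²(ℝ³)}² + ‖∇f‖_{L²(ℝ³)}²)^{3/8}. -/
open MeasureTheory ENNReal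
open scoped NNReal

/-- Three-dimensional Gagliardo–Nirenberg interpolation inequality
`‖f‖_{L⁴} ≤ M ‖f‖_{L²}^{1/4} ‖f‖_{H¹}^{3/4}` for compactly supported `C¹` functions on `ℝ³`. -/
theorem stmt_1 :
    ∃ M : ℝ, 0 < M ∧
      ∀ f : EuclideanSpace ℝ (Fin 3) → ℝ,
        ContDiff ℝ 1 f → HasCompactSupport f →
        (∫ x, |f x| ^ 4) ^ ((1 : ℝ) / 4) ≤
          M * ((∫ x, |f x| ^ 2) ^ ((1 : ℝ) / 2)) ^ ((1 : ℝ) / 4) *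
            ((∫ x, |f x| ^ 2) + ∫ x, ‖fderiv ℝ f x‖ ^ 2) ^ ((3 : ℝ) / 8) := by
  classical
  set C : ℝ≥0 :=
    eLpNormLESNormFDerivOfEqInnerConst (volume : Measure (EuclideanSpace ℝ (Fin 3))) 2 with hCdef
  have hC : ∀ f : EuclideanSpace ℝ (Fin 3) → ℝ, ContDiff ℝ 1 f → HasCompactSupport f →
      eLpNorm f 6 volume ≤ C * eLpNorm (fderiv ℝ f) 2 volume := by
    intro f hf h2f
    have h := eLpNorm_le_eLpNorm_fderiv_of_eq_inner
      (volume : Measure (EuclideanSpace ℝ (Fin 3))) hf h2f (p := 2) (p' := 6)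
      (by norm_num) (by simp) (by simp; norm_num)
    simpa using h
  refine ⟨max ((C : ℝ) ^ ((3 : ℝ) / 4)) 1, lt_max_of_lt_right one_pos, fun f hf h2f => ?_⟩
  have hfc : Continuous f := hf.continuous
  have hdc : Continuous (fderiv ℝ f) := (hf.fderiv_right (m := 0) le_rfl).continuous
  have h2d : HasCompactSupport (fderiv ℝ f) := HasCompactSupport.fderiv (𝕜 := ℝ) h2f
  have hf2 : MemLp f 2 volume := hfc.memLp_of_hasCompactSupport h2f
  have hf4 : MemLp f 4 volume := hfc.memLp_of_hasCompactSupport h2f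
  have hf6 : MemLp f 6 volume := hfc.memLp_of_hasCompactSupport h2f
  have hg2 : MemLp (fderiv ℝ f) 2 volume := hdc.memLp_of_hasCompactSupport h2d
  -- interpolation: ‖f‖₄ ≤ ‖f‖₂^(1/4) * ‖f‖₆^(3/4)
  have hmeas : AEMeasurable (fun x => (‖f x‖₊ : ℝ≥0∞)) volume :=
    (hfc.measurable.nnnorm.coe_nnreal_ennreal).aemeasurable
  have holder :
      (∫⁻ x, (‖f x‖₊ : ℝ≥0∞) ^ (4 : ℝ)) ≤
        (∫⁻ x, (‖f x‖₊ : ℝ≥0∞) ^ (2 : ℝ)) ^ ((1 : ℝ) / 2) *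
          (∫⁻ x, (‖f x‖₊ : ℝ≥0∞) ^ (6 : ℝ)) ^ ((1 : ℝ) / 2) := by
    have h := ENNReal.lintegral_mul_norm_pow_le
      (f := fun x => (‖f x‖₊ : ℝ≥0∞) ^ (2 : ℝ)) (g := fun x => (‖f x‖₊ : ℝ≥0∞) ^ (6 : ℝ))
      (μ := volume) (hmeas.pow_const _) (hmeas.pow_const _)
      (p := (1 : ℝ) / 2) (q := (1 : ℝ) / 2) (by norm_num) (by norm_num) (by norm_num)
    refine le_trans (le_of_eq ?_) h
    congr 1
    funext x
    rw [← ENNReal.rpow_mul, ← ENNReal.rpow_mul, ← ENNReal.rpow_add_of_nonneg]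
    · norm_num
    · norm_num
    · norm_num
  have e2 : eLpNorm f 2 volume = (∫⁻ x, (‖f x‖₊ : ℝ≥0∞) ^ (2 : ℝ)) ^ ((1 : ℝ) / 2) := by
    rw [eLpNorm_eq_lintegral_rpow_enorm_toReal (by norm_num) (by norm_num)]
    norm_num [enorm_eq_nnnorm]
  have e4 : eLpNorm f 4 volume = (∫⁻ x, (‖f x‖₊ : ℝ≥0∞) ^ (4 : ℝ)) ^ ((1 : ℝ) / 4) := by
    rw [eLpNorm_eq_lintegral_rpow_enorm_toReal (by norm_num) (by norm_num)]
    norm_num [enorm_eq_nnnorm]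
  have e6 : eLpNorm f 6 volume = (∫⁻ x, (‖f x‖₊ : ℝ≥0∞) ^ (6 : ℝ)) ^ ((1 : ℝ) / 6) := by
    rw [eLpNorm_eq_lintegral_rpow_enorm_toReal (by norm_num) (by norm_num)]
    norm_num [enorm_eq_nnnorm]
  have interp : eLpNorm f 4 volume ≤
      (eLpNorm f 2 volume) ^ ((1 : ℝ) / 4) * (eLpNorm f 6 volume) ^ ((3 : ℝ) / 4) := by
    rw [e2, e4, e6, ← ENNReal.rpow_mul, ← ENNReal.rpow_mul]
    calc (∫⁻ x, (‖f x‖₊ : ℝ≥0∞) ^ (4 : ℝ)) ^ ((1 : ℝ) / 4)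
        ≤ ((∫⁻ x, (‖f x‖₊ : ℝ≥0∞) ^ (2 : ℝ)) ^ ((1 : ℝ) / 2) *
            (∫⁻ x, (‖f x‖₊ : ℝ≥0∞) ^ (6 : ℝ)) ^ ((1 : ℝ) / 2)) ^ ((1 : ℝ) / 4) := by
          exact ENNReal.rpow_le_rpow holder (by norm_num)
      _ = _ := by
          rw [ENNReal.mul_rpow_of_nonneg _ _ (by norm_num), ← ENNReal.rpow_mul,
            ← ENNReal.rpow_mul]
          norm_num
  -- combine with Sobolev
  have sob := hC f hf h2f
  have main : eLpNorm f 4 volume ≤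
      (C : ℝ≥0∞) ^ ((3 : ℝ) / 4) * (eLpNorm f 2 volume) ^ ((1 : ℝ) / 4) *
        (eLpNorm (fderiv ℝ f) 2 volume) ^ ((3 : ℝ) / 4) := by
    refine interp.trans ?_
    have : (eLpNorm f 6 volume) ^ ((3 : ℝ) / 4) ≤
        ((C : ℝ≥0∞) * eLpNorm (fderiv ℝ f) 2 volume) ^ ((3 : ℝ) / 4) :=
      ENNReal.rpow_le_rpow sob (by norm_num)
    calc (eLpNorm f 2 volume) ^ ((1 : ℝ) / 4) * (eLpNorm f 6 volume) ^ ((3 : ℝ) / 4)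
        ≤ (eLpNorm f 2 volume) ^ ((1 : ℝ) / 4) *
            ((C : ℝ≥0∞) * eLpNorm (fderiv ℝ f) 2 volume) ^ ((3 : ℝ) / 4) := by gcongr
      _ = _ := by
          rw [ENNReal.mul_rpow_of_nonneg _ _ (by norm_num)]
          ring
  -- pass to real numbers
  have h2fin : eLpNorm f 2 volume ≠ ∞ := hf2.eLpNorm_ne_top
  have hgfin : eLpNorm (fderiv ℝ f) 2 volume ≠ ∞ := hg2.eLpNorm_ne_top
  have hCfin : (C : ℝ≥0∞) ^ ((3 : ℝ) / 4) ≠ ∞ := by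
    exact ENNReal.rpow_ne_top_of_nonneg (by norm_num) ENNReal.coe_ne_top
  have mainR : (eLpNorm f 4 volume).toReal ≤
      (C : ℝ) ^ ((3 : ℝ) / 4) * (eLpNorm f 2 volume).toReal ^ ((1 : ℝ) / 4) *
        (eLpNorm (fderiv ℝ f) 2 volume).toReal ^ ((3 : ℝ) / 4) := by
    have := ENNReal.toReal_mono (by
        refine ENNReal.mul_ne_top (ENNReal.mul_ne_top hCfin ?_) ?_
        · exact ENNReal.rpow_ne_top_of_nonneg (by norm_num) h2fin
        · exact ENNReal.rpow_ne_top_of_nonneg (by norm_num) hgfin) main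
    rw [ENNReal.toReal_mul, ENNReal.toReal_mul, ← ENNReal.toReal_rpow, ← ENNReal.toReal_rpow,
      ← ENNReal.toReal_rpow, ENNReal.coe_toReal] at this
    exact this
  -- identify toReal of eLpNorms with the integrals in the statement
  have t2 : (eLpNorm f 2 volume).toReal = (∫ x, |f x| ^ 2) ^ ((1 : ℝ) / 2) := by
    rw [hf2.eLpNorm_eq_integral_rpow_norm (by norm_num) (by norm_num)]
    rw [ENNReal.toReal_ofReal (by positivity)]
    norm_num [Real.norm_eq_abs, ENNReal.toReal_ofNat]
  have t4 : (eLpNorm f 4 volume).toReal = (∫ x, |f x| ^ 4) ^ ((1 : ℝ) / 4) := by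
    rw [hf4.eLpNorm_eq_integral_rpow_norm (by norm_num) (by norm_num)]
    rw [ENNReal.toReal_ofReal (by positivity)]
    norm_num [Real.norm_eq_abs]
  have tg : (eLpNorm (fderiv ℝ f) 2 volume).toReal =
      (∫ x, ‖fderiv ℝ f x‖ ^ 2) ^ ((1 : ℝ) / 2) := by
    rw [hg2.eLpNorm_eq_integral_rpow_norm (by norm_num) (by norm_num)]
    rw [ENNReal.toReal_ofReal (by positivity)]
    norm_num
  rw [t2, t4, tg] at mainR
  -- final elementary estimate
  set a := ∫ x, |f x| ^ 2 with ha
  set d := ∫ x, ‖fderiv ℝ f x‖ ^ 2 with hd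
  have ha0 : 0 ≤ a := integral_nonneg fun x => by positivity
  have hd0 : 0 ≤ d := integral_nonneg fun x => by positivity
  refine mainR.trans ?_
  have hstep : (d ^ ((1 : ℝ) / 2)) ^ ((3 : ℝ) / 4) ≤ (a + d) ^ ((3 : ℝ) / 8) := by
    rw [← Real.rpow_mul hd0, show (1 : ℝ) / 2 * (3 / 4) = 3 / 8 by norm_num]
    exact Real.rpow_le_rpow hd0 (by linarith) (by norm_num)
  calc (C : ℝ) ^ ((3 : ℝ) / 4) * (a ^ ((1 : ℝ) / 2)) ^ ((1 : ℝ) / 4) *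
        (d ^ ((1 : ℝ) / 2)) ^ ((3 : ℝ) / 4)
      ≤ max ((C : ℝ) ^ ((3 : ℝ) / 4)) 1 * (a ^ ((1 : ℝ) / 2)) ^ ((1 : ℝ) / 4) *
        (a + d) ^ ((3 : ℝ) / 8) := by
        have h1 : (C : ℝ) ^ ((3 : ℝ) / 4) ≤ max ((C : ℝ) ^ ((3 : ℝ) / 4)) 1 := le_max_left _ _
        have h2 : (0 : ℝ) ≤ (a ^ ((1 : ℝ) / 2)) ^ ((1 : ℝ) / 4) := by positivity
        have h3 : (0 : ℝ) ≤ (d ^ ((1 : ℝ) / 2)) ^ ((3 : ℝ) / 4) := by positivity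
        have h4 : (0 : ℝ) ≤ (C : ℝ) ^ ((3 : ℝ) / 4) := by positivity
        refine mul_le_mul (mul_le_mul h1 le_rfl h2 (by positivity)) hstep h3 (by positivity)
end

section
/- Let L₁, L₂ > 0, Ω = (0, L₁) × (0, L₂) ⊆ ℝ², k ≥ 0, D > 0, M₂ ≥ 0, and let κ : ℝ² → ℝ be continuous with κ(x) ≥ 0 for all x in the closure of Ω. Let u = (u₁, u₂) : [0, ∞) × ℝ² → ℝ² be continuous on [0, ∞) × cl(Ω), and let c : [0, ∞) × ℝ² → ℝ be continuous on [0, ∞) × cl(Ω), continuously differentiable in t and twice continuously differentiable in x on (0, ∞) × cl(Ω). Assume: (i) ∂u₁/∂x₁ + ∂u₂/∂x₂ = 0 on (0, ∞) × Ω; (ii) (1 + k)·∂c/∂t + u₁·∂c/∂x₁ + u₂·∂c/∂x₂ = D·(∂²c/∂x₁² + ∂²c/∂x₂²) − κ·c on (0, ∞) × Ω; (iii) for all t > 0: u₁(t, x) = 0 and ∂c/∂x₁(t, x) = 0 whenever x₁ ∈ {0, L₁} and x₂ ∈ [0, L₂], and u₂(t, x) = 0 and ∂c/∂x₂(t, x)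 = 0 whenever x₂ ∈ {0, L₂} and x₁ ∈ [0, L₁]; (iv) 0 ≤ c(0, x) ≤ M₂ for all x ∈ cl(Ω). Then 0 ≤ c(t, x) ≤ M₂ for all t ≥ 0 and all x ∈ cl(Ω). -/
open Set Filter Topology


/-- If `f` has derivative `f'` at `a` and `f ≤ f a` on `(b,a)` with `b < a`, then `0 ≤ f'`. -/
lemma aux_deriv_nonneg_left {f : ℝ → ℝ} {f' a b : ℝ} (hab : b < a)
    (hf : HasDerivAt f f' a) (hmax : ∀ s ∈ Set.Ioo b a, f s ≤ f a) : 0 ≤ f' := by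
  have h1 : HasDerivWithinAt f f' (Set.Ioo b a) a := hf.hasDerivWithinAt
  have h2 : Tendsto (slope f a) (𝓝[Set.Ioo b a] a) (𝓝 f') :=
    (hasDerivWithinAt_iff_tendsto_slope' (by simp)).1 h1
  have hne : (𝓝[Set.Ioo b a] a).NeBot := by
    apply mem_closure_iff_nhdsWithin_neBot.1
    rw [closure_Ioo hab.ne]
    exact ⟨hab.le, le_rfl⟩
  refine ge_of_tendsto h2 ?_
  filter_upwards [self_mem_nhdsWithin] with s hs
  have h3 : f s - f a ≤ 0 := sub_nonpos.mpr (hmax s hs)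
  have h4 : s - a < 0 := sub_neg.mpr hs.2
  rw [slope_def_field]
  exact div_nonneg_iff.mpr (Or.inr ⟨h3, h4.le⟩)

/-- Second derivative is nonpositive at a maximum over `[lo,hi]` where the first
derivative vanishes. -/
lemma aux_second_deriv_nonpos {f f' : ℝ → ℝ} {f'' lo hi a : ℝ}
    (hlo : lo ≤ a) (hhi : a ≤ hi) (hlohi : lo < hi)
    (hd : ∀ x ∈ Set.Icc lo hi, HasDerivAt f (f' x) x)
    (hd'' : HasDerivAt f' f'' a) (h0 : f' a = 0)
    (hmax : ∀ x ∈ Set.Icc lo hi, f x ≤ f a) : f'' ≤ 0 := by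
  by_contra hpos
  push_neg at hpos
  rcases lt_or_eq_of_le hhi with hahi | hahi
  · -- a < hi : f' > 0 just to the right of a
    have h1 : ∀ᶠ x in 𝓝[>] a, 0 < f' x := by
      have h2 : Tendsto (slope f' a) (𝓝[>] a) (𝓝 f'') :=
        (hasDerivWithinAt_iff_tendsto_slope' (by simp)).1 hd''.hasDerivWithinAt
      have h3 : ∀ᶠ x in 𝓝[>] a, 0 < slope f' a x :=
        h2.eventually (eventually_gt_nhds hpos)
      filter_upwards [h3, self_mem_nhdsWithin] with x hx hx'
      rw [slope_def_field, h0, sub_zero] at hx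
      have := mul_pos hx (sub_pos.mpr (hx' : a < x))
      rwa [div_mul_cancel₀ _ (sub_ne_zero.mpr (ne_of_gt hx'))] at this
    rcases mem_nhdsGT_iff_exists_Ioo_subset.1 h1 with ⟨u, hu, hsub⟩
    set b := min u hi with hb
    have hab : a < b := lt_min hu hahi
    set m := (a + b) / 2 with hm
    have ham : a < m := by simp [hm]; linarith
    have hmb : m < b := by simp [hm]; linarith
    have hmono : StrictMonoOn f (Set.Icc a m) := by
      apply strictMonoOn_of_deriv_pos (convex_Icc a m)
      · intro x hx
        exact ((hd x ⟨hlo.trans hx.1, hx.2.trans (le_trans hmb.le (min_le_right u hi))⟩).continuousAt).continuousWithinAt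
      · intro x hx
        rw [interior_Icc] at hx
        have hxmem : x ∈ Set.Ioo a u := ⟨hx.1, lt_of_lt_of_le (hx.2.trans hmb) (min_le_left u hi)⟩
        have : 0 < f' x := hsub hxmem
        rwa [(hd x ⟨hlo.trans (hx.1.le), (hx.2.trans hmb).le.trans (min_le_right u hi)⟩).deriv]
    have : f a < f m := hmono ⟨le_rfl, ham.le⟩ ⟨ham.le, le_rfl⟩ ham
    have hmIcc : m ∈ Set.Icc lo hi := ⟨hlo.trans ham.le, (hmb.le.trans (min_le_right u hi))⟩
    exact absurd (hmax m hmIcc) (not_le.mpr this)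
  · -- a = hi, so lo < a : f' < 0 just to the left of a
    have hloa : lo < a := hahi ▸ hlohi
    have h1 : ∀ᶠ x in 𝓝[<] a, f' x < 0 := by
      have h2 : Tendsto (slope f' a) (𝓝[<] a) (𝓝 f'') :=
        (hasDerivWithinAt_iff_tendsto_slope' (by simp)).1 hd''.hasDerivWithinAt
      have h3 : ∀ᶠ x in 𝓝[<] a, 0 < slope f' a x :=
        h2.eventually (eventually_gt_nhds hpos)
      filter_upwards [h3, self_mem_nhdsWithin] with x hx hx'
      rw [slope_def_field, h0, sub_zero] at hx
      have hxa : x - a < 0 := sub_neg.mpr hx'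
      by_contra hcon
      push_neg at hcon
      have : f' x / (x - a) ≤ 0 := div_nonpos_of_nonneg_of_nonpos hcon hxa.le
      linarith
    rcases mem_nhdsLT_iff_exists_Ioo_subset.1 h1 with ⟨u, hu, hsub⟩
    set b := max u lo with hb
    have hab : b < a := max_lt hu hloa
    set m := (a + b) / 2 with hm
    have hma : m < a := by simp [hm]; linarith
    have hbm : b < m := by simp [hm]; linarith
    have hanti : StrictAntiOn f (Set.Icc m a) := by
      apply strictAntiOn_of_deriv_neg (convex_Icc m a)
      · intro x hx
        exact ((hd x ⟨(le_max_right u lo).trans (hbm.le.trans hx.1), hx.2.trans (hahi ▸ le_rfl)⟩).continuousAt).continuousWithinAt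
      · intro x hx
        rw [interior_Icc] at hx
        have hxmem : x ∈ Set.Ioo u a := ⟨lt_of_le_of_lt (le_max_left u lo) (hbm.trans hx.1), hx.2⟩
        have : f' x < 0 := hsub hxmem
        rwa [(hd x ⟨(le_max_right u lo).trans ((hbm.trans hx.1).le), hx.2.le.trans (hahi ▸ le_rfl)⟩).deriv]
    have : f a < f m := hanti ⟨le_rfl, hma.le⟩ ⟨hma.le, le_rfl⟩ hma
    have hmIcc : m ∈ Set.Icc lo hi := ⟨(le_max_right u lo).trans hbm.le, hma.le.trans (hahi ▸ le_rfl)⟩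
    exact absurd (hmax m hmIcc) (not_le.mpr this)

lemma aux_upper_bound (L₁ L₂ k D M : ℝ) (hL₁ : 0 < L₁) (hL₂ : 0 < L₂)
    (hk : 0 ≤ k) (hD : 0 < D) (hM : 0 ≤ M)
    (κ : ℝ → ℝ → ℝ) (hκnn : ∀ x ∈ Set.Icc 0 L₁, ∀ y ∈ Set.Icc 0 L₂, 0 ≤ κ x y)
    (u₁ u₂ c ct cx cy cxx cyy : ℝ → ℝ → ℝ → ℝ)
    (hccont : ContinuousOn (fun q : ℝ × ℝ × ℝ => c q.1 q.2.1 q.2.2)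
      (Set.Ici 0 ×ˢ Set.Icc 0 L₁ ×ˢ Set.Icc 0 L₂))
    (hct : ∀ t > (0:ℝ), ∀ x ∈ Set.Icc 0 L₁, ∀ y ∈ Set.Icc 0 L₂,
      HasDerivAt (fun s => c s x y) (ct t x y) t)
    (hcx : ∀ t > (0:ℝ), ∀ x ∈ Set.Icc 0 L₁, ∀ y ∈ Set.Icc 0 L₂,
      HasDerivAt (fun a => c t a y) (cx t x y) x)
    (hcy : ∀ t > (0:ℝ), ∀ x ∈ Set.Icc 0 L₁, ∀ y ∈ Set.Icc 0 L₂,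
      HasDerivAt (fun b => c t x b) (cy t x y) y)
    (hcxx : ∀ t > (0:ℝ), ∀ x ∈ Set.Icc 0 L₁, ∀ y ∈ Set.Icc 0 L₂,
      HasDerivAt (fun a => cx t a y) (cxx t x y) x)
    (hcyy : ∀ t > (0:ℝ), ∀ x ∈ Set.Icc 0 L₁, ∀ y ∈ Set.Icc 0 L₂,
      HasDerivAt (fun b => cy t x b) (cyy t x y) y)
    (hpde : ∀ t > (0:ℝ), ∀ x ∈ Set.Icc 0 L₁, ∀ y ∈ Set.Icc 0 L₂,
      (1 + k) * ct t x y + u₁ t x y * cx t x y + u₂ t x y * cy t x y =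
        D * (cxx t x y + cyy t x y) - κ x y * c t x y)
    (hbcx : ∀ t > (0:ℝ), ∀ y ∈ Set.Icc 0 L₂, cx t 0 y = 0 ∧ cx t L₁ y = 0)
    (hbcy : ∀ t > (0:ℝ), ∀ x ∈ Set.Icc 0 L₁, cy t x 0 = 0 ∧ cy t x L₂ = 0)
    (hinit : ∀ x ∈ Set.Icc 0 L₁, ∀ y ∈ Set.Icc 0 L₂, c 0 x y ≤ M) :
    ∀ t, 0 ≤ t → ∀ x ∈ Set.Icc 0 L₁, ∀ y ∈ Set.Icc 0 L₂, c t x y ≤ M := by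
  intro T hT X hX Y hY
  rcases eq_or_lt_of_le hT with hT0 | hT0
  · exact hT0 ▸ hinit X hX Y hY
  -- main claim with the `ε` trick
  have key : ∀ ε > (0:ℝ), ∀ t ∈ Set.Icc 0 T, ∀ x ∈ Set.Icc 0 L₁, ∀ y ∈ Set.Icc 0 L₂,
      c t x y - ε * t ≤ M := by
    intro ε hε
    set Q : Set (ℝ × ℝ × ℝ) := Set.Icc 0 T ×ˢ Set.Icc 0 L₁ ×ˢ Set.Icc 0 L₂ with hQ
    have hQsub : Q ⊆ Set.Ici 0 ×ˢ Set.Icc 0 L₁ ×ˢ Set.Icc 0 L₂ := by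
      intro p hp
      exact ⟨hp.1.1, hp.2⟩
    set w : ℝ × ℝ × ℝ → ℝ := fun q => c q.1 q.2.1 q.2.2 - ε * q.1 with hw
    have hwcont : ContinuousOn w Q :=
      (hccont.mono hQsub).sub ((continuous_const.mul continuous_fst).continuousOn)
    have hQcomp : IsCompact Q :=
      (isCompact_Icc).prod ((isCompact_Icc).prod isCompact_Icc)
    have hQne : Q.Nonempty := ⟨(0, 0, 0), ⟨le_rfl, hT0.le⟩, ⟨le_rfl, hL₁.le⟩, ⟨le_rfl, hL₂.le⟩⟩
    obtain ⟨⟨t₀, x₀, y₀⟩, hmem, hmax⟩ := hQcomp.exists_isMaxOn hQne hwcont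
    have ht₀T : t₀ ∈ Set.Icc 0 T := hmem.1
    have hx₀ : x₀ ∈ Set.Icc 0 L₁ := hmem.2.1
    have hy₀ : y₀ ∈ Set.Icc 0 L₂ := hmem.2.2
    -- reduce to showing the max value is `≤ M`
    suffices hgoal : w (t₀, x₀, y₀) ≤ M by
      intro t ht x hx y hy
      have := hmax (show (t, x, y) ∈ Q from ⟨ht, hx, hy⟩)
      simp only [hw, Set.mem_setOf_eq] at this ⊢
      exact le_trans this hgoal
    by_contra hMlt
    push_neg at hMlt
    have hwM : M < c t₀ x₀ y₀ - ε * t₀ := hMlt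
    have ht₀ : 0 < t₀ := by
      rcases eq_or_lt_of_le ht₀T.1 with h0 | h0
      · exfalso
        have h2 := hinit x₀ hx₀ y₀ hy₀
        rw [← h0] at hwM
        nlinarith
      · exact h0
    -- slice maxima
    have hmaxx : ∀ a ∈ Set.Icc 0 L₁, c t₀ a y₀ ≤ c t₀ x₀ y₀ := by
      intro a ha
      have := hmax (show (t₀, a, y₀) ∈ Q from ⟨ht₀T, ha, hy₀⟩)
      simp only [hw, Set.mem_setOf_eq] at this
      linarith
    have hmaxy : ∀ b ∈ Set.Icc 0 L₂, c t₀ x₀ b ≤ c t₀ x₀ y₀ := by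
      intro b hb
      have := hmax (show (t₀, x₀, b) ∈ Q from ⟨ht₀T, hx₀, hb⟩)
      simp only [hw, Set.mem_setOf_eq] at this
      linarith
    -- first spatial derivatives vanish
    have hcx₀ : cx t₀ x₀ y₀ = 0 := by
      rcases eq_or_lt_of_le hx₀.1 with h0 | h0
      · rw [← h0]; exact (hbcx t₀ ht₀ y₀ hy₀).1
      rcases eq_or_lt_of_le hx₀.2 with h1 | h1
      · rw [h1]; exact (hbcx t₀ ht₀ y₀ hy₀).2
      have hloc : IsLocalMax (fun a => c t₀ a y₀) x₀ := by
        filter_upwards [Icc_mem_nhds h0 h1] with a ha using hmaxx a ha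
      exact hloc.hasDerivAt_eq_zero (hcx t₀ ht₀ x₀ hx₀ y₀ hy₀)
    have hcy₀ : cy t₀ x₀ y₀ = 0 := by
      rcases eq_or_lt_of_le hy₀.1 with h0 | h0
      · rw [← h0]; exact (hbcy t₀ ht₀ x₀ hx₀).1
      rcases eq_or_lt_of_le hy₀.2 with h1 | h1
      · rw [h1]; exact (hbcy t₀ ht₀ x₀ hx₀).2
      have hloc : IsLocalMax (fun b => c t₀ x₀ b) y₀ := by
        filter_upwards [Icc_mem_nhds h0 h1] with b hb using hmaxy b hb
      exact hloc.hasDerivAt_eq_zero (hcy t₀ ht₀ x₀ hx₀ y₀ hy₀)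
    -- second spatial derivatives are nonpositive
    have hcxx₀ : cxx t₀ x₀ y₀ ≤ 0 :=
      aux_second_deriv_nonpos hx₀.1 hx₀.2 hL₁
        (fun a ha => hcx t₀ ht₀ a ha y₀ hy₀) (hcxx t₀ ht₀ x₀ hx₀ y₀ hy₀) hcx₀ hmaxx
    have hcyy₀ : cyy t₀ x₀ y₀ ≤ 0 :=
      aux_second_deriv_nonpos hy₀.1 hy₀.2 hL₂
        (fun b hb => hcy t₀ ht₀ x₀ hx₀ b hb) (hcyy t₀ ht₀ x₀ hx₀ y₀ hy₀) hcy₀ hmaxy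
    -- time derivative is at least ε
    have hct₀ : ε ≤ ct t₀ x₀ y₀ := by
      have hd : HasDerivAt (fun s => c s x₀ y₀ - ε * s) (ct t₀ x₀ y₀ - ε) t₀ := by
        have h1 := hct t₀ ht₀ x₀ hx₀ y₀ hy₀
        have h2 : HasDerivAt (fun s : ℝ => ε * s) ε t₀ := by
          simpa using (hasDerivAt_id t₀).const_mul ε
        exact h1.sub h2
      have := aux_deriv_nonneg_left ht₀ hd (fun s hs => by
        have hsT : s ∈ Set.Icc 0 T := ⟨hs.1.le, hs.2.le.trans ht₀T.2⟩
        have := hmax (show (s, x₀, y₀) ∈ Q from ⟨hsT, hx₀, hy₀⟩)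
        simpa [hw, Set.mem_setOf_eq] using this)
      linarith
    -- positivity of c at the max point
    have hcpos : 0 < c t₀ x₀ y₀ := by nlinarith
    -- contradiction from the PDE
    have hp := hpde t₀ ht₀ x₀ hx₀ y₀ hy₀
    rw [hcx₀, hcy₀] at hp
    have h5 : 0 ≤ κ x₀ y₀ * c t₀ x₀ y₀ := mul_nonneg (hκnn x₀ hx₀ y₀ hy₀) hcpos.le
    have h6 : D * (cxx t₀ x₀ y₀ + cyy t₀ x₀ y₀) ≤ 0 :=
      mul_nonpos_of_nonneg_of_nonpos hD.le (by linarith)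
    nlinarith [mul_le_mul_of_nonneg_left hct₀ (show (0:ℝ) ≤ 1 + k by linarith)]
  -- pass to the limit ε → 0
  by_contra hcon
  push_neg at hcon
  have hε : 0 < (c T X Y - M) / (2 * T) := by
    apply div_pos (by linarith) (by linarith)
  have := key _ hε T ⟨hT, le_rfl⟩ X hX Y hY
  rw [div_mul_eq_mul_div, mul_comm] at this
  have h2 : (c T X Y - M) / 2 = T * (c T X Y - M) / (2 * T) := by
    field_simp
  nlinarith

/-- Maximum principle for the adsorption–convection–diffusion–reaction equation
`(1+k)∂ₜc + u·∇c = DΔc − κc` on the rectangle `Ω = (0,L₁)×(0,L₂)` with divergence-free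
velocity, no-penetration and no-flux boundary conditions: if `0 ≤ c(0,·) ≤ M₂` on `cl(Ω)`,
then `0 ≤ c(t,·) ≤ M₂` on `cl(Ω)` for all `t ≥ 0`.

Here `c t x y` is the concentration, `ct, cx, cy, cxx, cyy` are its partial derivatives
(first in time, first and second in each space variable), `u₁, u₂` the velocity components
with spatial derivatives `u₁x, u₂y`, `κ x y ≥ 0` the reaction rate, `k ≥ 0` the adsorption
coefficient and `D > 0` the diffusion coefficient. -/
theorem stmt_18 (L₁ L₂ k D M₂ : ℝ) (hL₁ : 0 < L₁) (hL₂ : 0 < L₂)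
    (hk : 0 ≤ k) (hD : 0 < D) (hM₂ : 0 ≤ M₂)
    (κ : ℝ → ℝ → ℝ)
    (hκcont : ContinuousOn (fun q : ℝ × ℝ => κ q.1 q.2) (Set.Icc 0 L₁ ×ˢ Set.Icc 0 L₂))
    (hκnn : ∀ x ∈ Set.Icc 0 L₁, ∀ y ∈ Set.Icc 0 L₂, 0 ≤ κ x y)
    (u₁ u₂ c ct cx cy cxx cyy u₁x u₂y : ℝ → ℝ → ℝ → ℝ)
    -- continuity of the velocity on `[0,∞) × cl(Ω)`
    (hu₁cont : ContinuousOn (fun q : ℝ × ℝ × ℝ => u₁ q.1 q.2.1 q.2.2)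
      (Set.Ici 0 ×ˢ Set.Icc 0 L₁ ×ˢ Set.Icc 0 L₂))
    (hu₂cont : ContinuousOn (fun q : ℝ × ℝ × ℝ => u₂ q.1 q.2.1 q.2.2)
      (Set.Ici 0 ×ˢ Set.Icc 0 L₁ ×ˢ Set.Icc 0 L₂))
    -- continuity of the concentration on `[0,∞) × cl(Ω)`
    (hccont : ContinuousOn (fun q : ℝ × ℝ × ℝ => c q.1 q.2.1 q.2.2)
      (Set.Ici 0 ×ˢ Set.Icc 0 L₁ ×ˢ Set.Icc 0 L₂))
    -- existence of the partial derivatives of `c` on `(0,∞) × cl(Ω)`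
    (hct : ∀ t > (0:ℝ), ∀ x ∈ Set.Icc 0 L₁, ∀ y ∈ Set.Icc 0 L₂,
      HasDerivAt (fun s => c s x y) (ct t x y) t)
    (hcx : ∀ t > (0:ℝ), ∀ x ∈ Set.Icc 0 L₁, ∀ y ∈ Set.Icc 0 L₂,
      HasDerivAt (fun a => c t a y) (cx t x y) x)
    (hcy : ∀ t > (0:ℝ), ∀ x ∈ Set.Icc 0 L₁, ∀ y ∈ Set.Icc 0 L₂,
      HasDerivAt (fun b => c t x b) (cy t x y) y)
    (hcxx : ∀ t > (0:ℝ), ∀ x ∈ Set.Icc 0 L₁, ∀ y ∈ Set.Icc 0 L₂,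
      HasDerivAt (fun a => cx t a y) (cxx t x y) x)
    (hcyy : ∀ t > (0:ℝ), ∀ x ∈ Set.Icc 0 L₁, ∀ y ∈ Set.Icc 0 L₂,
      HasDerivAt (fun b => cy t x b) (cyy t x y) y)
    -- continuity of the partial derivatives of `c` on `(0,∞) × cl(Ω)`
    (hctcont : ContinuousOn (fun q : ℝ × ℝ × ℝ => ct q.1 q.2.1 q.2.2)
      (Set.Ioi 0 ×ˢ Set.Icc 0 L₁ ×ˢ Set.Icc 0 L₂))
    (hcxcont : ContinuousOn (fun q : ℝ × ℝ × ℝ => cx q.1 q.2.1 q.2.2)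
      (Set.Ioi 0 ×ˢ Set.Icc 0 L₁ ×ˢ Set.Icc 0 L₂))
    (hcycont : ContinuousOn (fun q : ℝ × ℝ × ℝ => cy q.1 q.2.1 q.2.2)
      (Set.Ioi 0 ×ˢ Set.Icc 0 L₁ ×ˢ Set.Icc 0 L₂))
    (hcxxcont : ContinuousOn (fun q : ℝ × ℝ × ℝ => cxx q.1 q.2.1 q.2.2)
      (Set.Ioi 0 ×ˢ Set.Icc 0 L₁ ×ˢ Set.Icc 0 L₂))
    (hcyycont : ContinuousOn (fun q : ℝ × ℝ × ℝ => cyy q.1 q.2.1 q.2.2)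
      (Set.Ioi 0 ×ˢ Set.Icc 0 L₁ ×ˢ Set.Icc 0 L₂))
    -- spatial derivatives of the velocity on `(0,∞) × Ω`
    (hu₁x : ∀ t > (0:ℝ), ∀ x ∈ Set.Ioo 0 L₁, ∀ y ∈ Set.Ioo 0 L₂,
      HasDerivAt (fun a => u₁ t a y) (u₁x t x y) x)
    (hu₂y : ∀ t > (0:ℝ), ∀ x ∈ Set.Ioo 0 L₁, ∀ y ∈ Set.Ioo 0 L₂,
      HasDerivAt (fun b => u₂ t x b) (u₂y t x y) y)
    -- (i) incompressibility on `(0,∞) × Ω`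
    (hdiv : ∀ t > (0:ℝ), ∀ x ∈ Set.Ioo 0 L₁, ∀ y ∈ Set.Ioo 0 L₂,
      u₁x t x y + u₂y t x y = 0)
    -- (ii) the PDE on `(0,∞) × Ω`
    (hpde : ∀ t > (0:ℝ), ∀ x ∈ Set.Ioo 0 L₁, ∀ y ∈ Set.Ioo 0 L₂,
      (1 + k) * ct t x y + u₁ t x y * cx t x y + u₂ t x y * cy t x y =
        D * (cxx t x y + cyy t x y) - κ x y * c t x y)
    -- (iii) no-penetration and no-flux boundary conditions
    (hbc₁ : ∀ t > (0:ℝ), ∀ y ∈ Set.Icc 0 L₂,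
      u₁ t 0 y = 0 ∧ u₁ t L₁ y = 0 ∧ cx t 0 y = 0 ∧ cx t L₁ y = 0)
    (hbc₂ : ∀ t > (0:ℝ), ∀ x ∈ Set.Icc 0 L₁,
      u₂ t x 0 = 0 ∧ u₂ t x L₂ = 0 ∧ cy t x 0 = 0 ∧ cy t x L₂ = 0)
    -- (iv) bounds on the initial data
    (hinit : ∀ x ∈ Set.Icc 0 L₁, ∀ y ∈ Set.Icc 0 L₂, 0 ≤ c 0 x y ∧ c 0 x y ≤ M₂) :
    ∀ t, 0 ≤ t → ∀ x ∈ Set.Icc 0 L₁, ∀ y ∈ Set.Icc 0 L₂,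
      0 ≤ c t x y ∧ c t x y ≤ M₂ := by
  -- Extend the PDE from the open rectangle to its closure by continuity.
  have hpdeC : ∀ t > (0:ℝ), ∀ x ∈ Set.Icc 0 L₁, ∀ y ∈ Set.Icc 0 L₂,
      (1 + k) * ct t x y + u₁ t x y * cx t x y + u₂ t x y * cy t x y =
        D * (cxx t x y + cyy t x y) - κ x y * c t x y := by
    intro t ht
    set K : Set (ℝ × ℝ) := Set.Icc 0 L₁ ×ˢ Set.Icc 0 L₂ with hK
    set U : Set (ℝ × ℝ) := Set.Ioo 0 L₁ ×ˢ Set.Ioo 0 L₂ with hU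
    have hUK : U ⊆ K := Set.prod_mono Set.Ioo_subset_Icc_self Set.Ioo_subset_Icc_self
    have hKcl : K ⊆ closure U := by
      have hcl : closure U = K := by
        simp only [hU, hK, closure_prod_eq, closure_Ioo hL₁.ne, closure_Ioo hL₂.ne]
      rw [hcl]
    set F : ℝ × ℝ → ℝ := fun p =>
      (1 + k) * ct t p.1 p.2 + u₁ t p.1 p.2 * cx t p.1 p.2 + u₂ t p.1 p.2 * cy t p.1 p.2 -
        (D * (cxx t p.1 p.2 + cyy t p.1 p.2) - κ p.1 p.2 * c t p.1 p.2) with hF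
    have hemb : Continuous (fun p : ℝ × ℝ => ((t, p) : ℝ × ℝ × ℝ)) :=
      continuous_const.prodMk continuous_id
    have hmapsIoi : ∀ p ∈ K, ((t, p) : ℝ × ℝ × ℝ) ∈ Set.Ioi 0 ×ˢ Set.Icc 0 L₁ ×ˢ Set.Icc 0 L₂ :=
      fun p hp => ⟨ht, hp.1, hp.2⟩
    have hmapsIci : ∀ p ∈ K, ((t, p) : ℝ × ℝ × ℝ) ∈ Set.Ici 0 ×ˢ Set.Icc 0 L₁ ×ˢ Set.Icc 0 L₂ :=
      fun p hp => ⟨ht.le, hp.1, hp.2⟩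
    have hFcont : ContinuousOn F K := by
      apply ContinuousOn.sub
      · exact (((continuousOn_const.mul (hctcont.comp hemb.continuousOn hmapsIoi)).add
          ((hu₁cont.comp hemb.continuousOn hmapsIci).mul
            (hcxcont.comp hemb.continuousOn hmapsIoi))).add
          ((hu₂cont.comp hemb.continuousOn hmapsIci).mul
            (hcycont.comp hemb.continuousOn hmapsIoi)))
      · exact (continuousOn_const.mul ((hcxxcont.comp hemb.continuousOn hmapsIoi).add
          (hcyycont.comp hemb.continuousOn hmapsIoi))).sub
          ((hκcont.mono (by intro p hp; exact hp)).mul (hccont.comp hemb.continuousOn hmapsIci))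
    have hFzero : ∀ p ∈ U, F p = 0 := by
      intro p hp
      have := hpde t ht p.1 hp.1 p.2 hp.2
      simp only [hF]
      linarith
    have hFzeroK : ∀ p ∈ K, F p = 0 := by
      intro p hp
      have hne : (𝓝[U] p).NeBot := mem_closure_iff_nhdsWithin_neBot.1 (hKcl hp)
      have h1 : Filter.Tendsto F (𝓝[U] p) (𝓝 (F p)) :=
        (hFcont p hp).mono_left (nhdsWithin_mono p hUK)
      have h2 : Filter.Tendsto F (𝓝[U] p) (𝓝 0) := by
        have heq : F =ᶠ[𝓝[U] p] fun _ => (0:ℝ) := by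
          filter_upwards [self_mem_nhdsWithin] with q hq using hFzero q hq
        exact Filter.Tendsto.congr' heq.symm tendsto_const_nhds
      exact tendsto_nhds_unique h1 h2
    intro x hx y hy
    have := hFzeroK (x, y) ⟨hx, hy⟩
    simp only [hF] at this
    linarith
  -- Upper bound
  have hupper := aux_upper_bound L₁ L₂ k D M₂ hL₁ hL₂ hk hD hM₂ κ hκnn u₁ u₂ c ct cx cy cxx cyy
    hccont hct hcx hcy hcxx hcyy hpdeC
    (fun t ht y hy => ⟨(hbc₁ t ht y hy).2.2.1, (hbc₁ t ht y hy).2.2.2⟩)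
    (fun t ht x hx => ⟨(hbc₂ t ht x hx).2.2.1, (hbc₂ t ht x hx).2.2.2⟩)
    (fun x hx y hy => (hinit x hx y hy).2)
  -- Lower bound, by applying the upper bound to `-c` with bound `0`
  have hlower := aux_upper_bound L₁ L₂ k D 0 hL₁ hL₂ hk hD le_rfl κ hκnn u₁ u₂
    (fun t x y => -c t x y) (fun t x y => -ct t x y) (fun t x y => -cx t x y)
    (fun t x y => -cy t x y) (fun t x y => -cxx t x y) (fun t x y => -cyy t x y)
    hccont.neg
    (fun t ht x hx y hy => (hct t ht x hx y hy).neg)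
    (fun t ht x hx y hy => (hcx t ht x hx y hy).neg)
    (fun t ht x hx y hy => (hcy t ht x hx y hy).neg)
    (fun t ht x hx y hy => (hcxx t ht x hx y hy).neg)
    (fun t ht x hx y hy => (hcyy t ht x hx y hy).neg)
    (fun t ht x hx y hy => by
      have h := hpdeC t ht x hx y hy
      show (1 + k) * (-ct t x y) + u₁ t x y * (-cx t x y) + u₂ t x y * (-cy t x y) =
        D * (-cxx t x y + -cyy t x y) - κ x y * (-c t x y)
      linarith)
    (fun t ht y hy => ⟨show -cx t 0 y = 0 by rw [(hbc₁ t ht y hy).2.2.1, neg_zero],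
      show -cx t L₁ y = 0 by rw [(hbc₁ t ht y hy).2.2.2, neg_zero]⟩)
    (fun t ht x hx => ⟨show -cy t x 0 = 0 by rw [(hbc₂ t ht x hx).2.2.1, neg_zero],
      show -cy t x L₂ = 0 by rw [(hbc₂ t ht x hx).2.2.2, neg_zero]⟩)
    (fun x hx y hy => show -c 0 x y ≤ 0 from neg_nonpos.mpr (hinit x hx y hy).1)
  intro t ht x hx y hy
  have h1 := hupper t ht x hx y hy
  have h2 : -c t x y ≤ 0 := hlower t ht x hx y hy
  exact ⟨by linarith, h1⟩
end

section
/- Let L₁, L₂ > 0, Ω = (0, L₁) × (0, L₂) ⊆ ℝ², k ≥ 0, D > 0, M₂ ≥ 0, κ₁ > 0, and let κ : ℝ² → ℝ be continuous with κ(x) ≥ κ₁ for all x in the closure of Ω. Let u = (u₁, u₂) : [0, ∞) × ℝ² → ℝ² be continuous on [0, ∞) × cl(Ω), and let c : [0, ∞) × ℝ² → ℝ be continuous on [0, ∞) × cl(Ω), continuously differentiable in t and twice continuously differentiable in x on (0, ∞) × cl(Ω). Assume: (i) ∂u₁/∂x₁ + ∂u₂/∂x₂ = 0 on (0, ∞)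 × Ω; (ii) (1 + k)·∂c/∂t + u₁·∂c/∂x₁ + u₂·∂c/∂x₂ = D·(∂²c/∂x₁² + ∂²c/∂x₂²) − κ·c on (0, ∞) × Ω; (iii) for all t > 0: u₁(t, x) = 0 and ∂c/∂x₁(t, x) = 0 whenever x₁ ∈ {0, L₁} and x₂ ∈ [0, L₂], and u₂(t, x) = 0 and ∂c/∂x₂(t, x) = 0 whenever x₂ ∈ {0, L₂} and x₁ ∈ [0, L₁]; (iv) 0 ≤ c(0, x) ≤ M₂ for all x ∈ cl(Ω). Then 0 ≤ c(t, x) ≤ M₂·exp(−κ₁·t/(1 + k)) for all t ≥ 0 and all x ∈ cl(Ω); in particular sup_{x ∈ cl(Ω)} |c(t, x)| decays exponentially to 0 as t → ∞. -/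
open Set Filter Topology

lemma aux_time_deriv_nonneg {T t₀ a : ℝ} {g : ℝ → ℝ} (h : HasDerivAt g a t₀)
    (ht₀ : 0 < t₀) (hT : t₀ ≤ T) (hmax : ∀ s ∈ Icc 0 T, g s ≤ g t₀) : 0 ≤ a := by
  have hs : Tendsto (slope g t₀) (𝓝[<] t₀) (𝓝 a) :=
    (hasDerivAt_iff_tendsto_slope.1 h).mono_left
      (nhdsWithin_mono _ fun s hs => ne_of_lt hs)
  refine ge_of_tendsto hs ?_
  filter_upwards [Ioo_mem_nhdsLT_of_mem (show t₀ ∈ Ioc 0 t₀ from ⟨ht₀, le_refl _⟩)]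
    with s hs'
  have hgs : g s ≤ g t₀ := hmax s ⟨hs'.1.le, hs'.2.le.trans hT⟩
  rw [slope_def_field]
  exact div_nonneg_of_nonpos (by linarith) (by linarith [hs'.2])

lemma aux_second_deriv_nonpos_s19 {L x₀ f'' : ℝ} {f f' : ℝ → ℝ} (hL : 0 < L)
    (hd : ∀ a ∈ Icc 0 L, HasDerivAt f (f' a) a) (hx₀ : x₀ ∈ Icc 0 L)
    (hdd : HasDerivAt f' f'' x₀) (h0 : f' x₀ = 0)
    (hmax : ∀ a ∈ Icc 0 L, f a ≤ f x₀) : f'' ≤ 0 := by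
  by_contra hpos
  push_neg at hpos
  have hs : Tendsto (slope f' x₀) (𝓝[≠] x₀) (𝓝 f'') := hasDerivAt_iff_tendsto_slope.1 hdd
  rcases lt_or_eq_of_le hx₀.2 with hlt | heq
  · have hsr : Tendsto (slope f' x₀) (𝓝[>] x₀) (𝓝 f'') :=
      hs.mono_left (nhdsWithin_mono _ fun s hs => ne_of_gt hs)
    have hev : ∀ᶠ s in 𝓝[>] x₀, 0 < slope f' x₀ s := hsr.eventually (eventually_gt_nhds hpos)
    rw [eventually_nhdsWithin_iff] at hev
    rcases Metric.eventually_nhds_iff.1 hev with ⟨δ, hδ, hball⟩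
    set b := min (x₀ + δ / 2) ((x₀ + L) / 2) with hb
    have hx₀b : x₀ < b := by
      apply lt_min <;> [linarith; linarith]
    have hbL : b ≤ L := le_trans (min_le_right _ _) (by linarith)
    have hfpos : ∀ s ∈ Ioo x₀ b, 0 < f' s := by
      intro s hsi
      have h1 : dist s x₀ < δ := by
        rw [Real.dist_eq, abs_of_pos (by linarith [hsi.1])]
        have := hsi.2
        have : s < x₀ + δ / 2 := lt_of_lt_of_le this (min_le_left _ _)
        linarith
      have h2 : 0 < slope f' x₀ s := hball h1 hsi.1
      rw [slope_def_field, h0, sub_zero] at h2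
      rcases div_pos_iff.1 h2 with h3 | h3
      · exact h3.1
      · linarith [hsi.1, h3.2]
    have hcont : ContinuousOn f (Icc x₀ b) := fun a ha =>
      ((hd a ⟨le_trans hx₀.1 ha.1, le_trans ha.2 hbL⟩).continuousAt).continuousWithinAt
    obtain ⟨ξ, hξ, hξeq⟩ := exists_hasDerivAt_eq_slope f f' hx₀b hcont
      (fun a ha => hd a ⟨le_trans hx₀.1 ha.1.le, le_trans ha.2.le hbL⟩)
    have : 0 < f' ξ := hfpos ξ hξ
    rw [hξeq] at this
    have hfb : f b ≤ f x₀ := hmax b ⟨le_trans hx₀.1 hx₀b.le, hbL⟩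
    have : 0 < (f b - f x₀) / (b - x₀) := this
    nlinarith [div_nonpos_of_nonpos_of_nonneg (by linarith : f b - f x₀ ≤ 0)
      (by linarith : (0:ℝ) ≤ b - x₀)]
  · have hx₀pos : 0 < x₀ := heq ▸ hL
    have hsl : Tendsto (slope f' x₀) (𝓝[<] x₀) (𝓝 f'') :=
      hs.mono_left (nhdsWithin_mono _ fun s hs => ne_of_lt hs)
    have hev : ∀ᶠ s in 𝓝[<] x₀, 0 < slope f' x₀ s := hsl.eventually (eventually_gt_nhds hpos)
    rw [eventually_nhdsWithin_iff] at hev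
    rcases Metric.eventually_nhds_iff.1 hev with ⟨δ, hδ, hball⟩
    set a := max (x₀ - δ / 2) (x₀ / 2) with ha
    have hax₀ : a < x₀ := by
      apply max_lt <;> [linarith; linarith]
    have ha0 : 0 ≤ a := le_trans (by linarith) (le_max_right _ _)
    have hfneg : ∀ s ∈ Ioo a x₀, f' s < 0 := by
      intro s hsi
      have h1 : dist s x₀ < δ := by
        rw [Real.dist_eq, abs_of_neg (by linarith [hsi.2])]
        have : x₀ - δ / 2 ≤ a := le_max_left _ _
        linarith [hsi.1]
      have h2 : 0 < slope f' x₀ s := hball h1 hsi.2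
      rw [slope_def_field, h0, sub_zero] at h2
      rcases div_pos_iff.1 h2 with h3 | h3
      · linarith [hsi.2, h3.2]
      · exact h3.1
    have hcont : ContinuousOn f (Icc a x₀) := fun z hz =>
      ((hd z ⟨le_trans ha0 hz.1, le_trans hz.2 hx₀.2⟩).continuousAt).continuousWithinAt
    obtain ⟨ξ, hξ, hξeq⟩ := exists_hasDerivAt_eq_slope f f' hax₀ hcont
      (fun z hz => hd z ⟨le_trans ha0 hz.1.le, le_trans hz.2.le hx₀.2⟩)
    have hneg : f' ξ < 0 := hfneg ξ hξ
    rw [hξeq] at hneg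
    have hfa : f a ≤ f x₀ := hmax a ⟨ha0, le_trans hax₀.le hx₀.2⟩
    have := div_nonneg (by linarith : (0:ℝ) ≤ f x₀ - f a) (by linarith : (0:ℝ) ≤ x₀ - a)
    linarith

lemma aux_pde_ext {L₁ L₂ : ℝ} (hL₁ : 0 < L₁) (hL₂ : 0 < L₂) (F : ℝ × ℝ × ℝ → ℝ)
    (hF : ContinuousOn F (Ioi 0 ×ˢ Icc 0 L₁ ×ˢ Icc 0 L₂))
    (h0 : ∀ q ∈ (Ioi (0:ℝ) ×ˢ Ioo 0 L₁ ×ˢ Ioo 0 L₂ : Set (ℝ × ℝ × ℝ)), F q = 0)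
    {t x y : ℝ} (ht : 0 < t) (hx : x ∈ Icc 0 L₁) (hy : y ∈ Icc 0 L₂) :
    F (t, x, y) = 0 := by
  set Dn : Set (ℝ × ℝ × ℝ) := Ioi 0 ×ˢ Ioo 0 L₁ ×ˢ Ioo 0 L₂ with hDn
  have hdense : (t, x, y) ∈ closure Dn := by
    rw [hDn, closure_prod_eq, closure_prod_eq, closure_Ioo hL₁.ne, closure_Ioo hL₂.ne]
    exact ⟨subset_closure ht, hx, hy⟩
  have hsub : Dn ⊆ Ioi 0 ×ˢ Icc 0 L₁ ×ˢ Icc 0 L₂ :=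
    prod_mono subset_rfl (prod_mono Ioo_subset_Icc_self Ioo_subset_Icc_self)
  have hne : (𝓝[Dn] (t, x, y)).NeBot := mem_closure_iff_nhdsWithin_neBot.1 hdense
  have h1 : Tendsto F (𝓝[Dn] (t, x, y)) (𝓝 (F (t, x, y))) :=
    (hF (t, x, y) ⟨ht, hx, hy⟩).mono_left (nhdsWithin_mono _ hsub)
  have h2 : Tendsto F (𝓝[Dn] (t, x, y)) (𝓝 0) := by
    refine Tendsto.congr' ?_ tendsto_const_nhds
    filter_upwards [self_mem_nhdsWithin] with q hq using (h0 q hq).symm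
  exact tendsto_nhds_unique h1 h2
lemma aux_max_principle (L₁ L₂ T k D M : ℝ) (hL₁ : 0 < L₁) (hL₂ : 0 < L₂)
    (hk : 0 ≤ k) (hD : 0 < D) (hM : 0 ≤ M)
    (ρ : ℝ → ℝ → ℝ) (hρ : ∀ x ∈ Icc 0 L₁, ∀ y ∈ Icc 0 L₂, 0 ≤ ρ x y)
    (u₁ u₂ w wt wx wy wxx wyy : ℝ → ℝ → ℝ → ℝ)
    (hwcont : ContinuousOn (fun q : ℝ × ℝ × ℝ => w q.1 q.2.1 q.2.2)
      (Icc 0 T ×ˢ Icc 0 L₁ ×ˢ Icc 0 L₂))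
    (hwt : ∀ t > (0:ℝ), ∀ x ∈ Icc 0 L₁, ∀ y ∈ Icc 0 L₂,
      HasDerivAt (fun s => w s x y) (wt t x y) t)
    (hwx : ∀ t > (0:ℝ), ∀ x ∈ Icc 0 L₁, ∀ y ∈ Icc 0 L₂,
      HasDerivAt (fun a => w t a y) (wx t x y) x)
    (hwy : ∀ t > (0:ℝ), ∀ x ∈ Icc 0 L₁, ∀ y ∈ Icc 0 L₂,
      HasDerivAt (fun b => w t x b) (wy t x y) y)
    (hwxx : ∀ t > (0:ℝ), ∀ x ∈ Icc 0 L₁, ∀ y ∈ Icc 0 L₂,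
      HasDerivAt (fun a => wx t a y) (wxx t x y) x)
    (hwyy : ∀ t > (0:ℝ), ∀ x ∈ Icc 0 L₁, ∀ y ∈ Icc 0 L₂,
      HasDerivAt (fun b => wy t x b) (wyy t x y) y)
    (hpde : ∀ t > (0:ℝ), ∀ x ∈ Icc 0 L₁, ∀ y ∈ Icc 0 L₂,
      (1 + k) * wt t x y + u₁ t x y * wx t x y + u₂ t x y * wy t x y =
        D * (wxx t x y + wyy t x y) - ρ x y * w t x y)
    (hneu₁ : ∀ t > (0:ℝ), ∀ y ∈ Icc 0 L₂, wx t 0 y = 0 ∧ wx t L₁ y = 0)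
    (hneu₂ : ∀ t > (0:ℝ), ∀ x ∈ Icc 0 L₁, wy t x 0 = 0 ∧ wy t x L₂ = 0)
    (hinit : ∀ x ∈ Icc 0 L₁, ∀ y ∈ Icc 0 L₂, w 0 x y ≤ M) :
    ∀ t ∈ Icc 0 T, ∀ x ∈ Icc 0 L₁, ∀ y ∈ Icc 0 L₂, w t x y ≤ M := by
  intro t ht x hx y hy
  have key : ∀ ε > (0:ℝ), w t x y ≤ M + ε * t := by
    intro ε hε
    set K : Set (ℝ × ℝ × ℝ) := Icc 0 T ×ˢ Icc 0 L₁ ×ˢ Icc 0 L₂ with hK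
    have hKc : IsCompact K := (isCompact_Icc.prod (isCompact_Icc.prod isCompact_Icc))
    have hKne : K.Nonempty := ⟨(t, x, y), ⟨ht, hx, hy⟩⟩
    set v : ℝ × ℝ × ℝ → ℝ := fun q => w q.1 q.2.1 q.2.2 - ε * q.1 with hv
    have hvcont : ContinuousOn v K :=
      hwcont.sub ((continuous_const.mul continuous_fst).continuousOn)
    obtain ⟨p, hpK, hpmax⟩ := hKc.exists_isMaxOn hKne hvcont
    suffices hvp : v p ≤ M by
      have h2 := hpmax (show (t, x, y) ∈ K from ⟨ht, hx, hy⟩)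
      simp only [hv] at h2
      have : w t x y - ε * t ≤ M := le_trans h2 hvp
      linarith
    by_contra hcon
    push_neg at hcon
    obtain ⟨t₀, x₀, y₀⟩ := p
    obtain ⟨ht₀, hx₀, hy₀⟩ : t₀ ∈ Icc 0 T ∧ x₀ ∈ Icc 0 L₁ ∧ y₀ ∈ Icc 0 L₂ := hpK
    have ht₀pos : 0 < t₀ := by
      rcases lt_or_eq_of_le ht₀.1 with h | h
      · exact h
      · exfalso
        have := hinit x₀ hx₀ y₀ hy₀
        simp only [hv, ← h] at hcon
        simp at hcon
        linarith
    -- each slice inequality from the max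
    have hmaxpt : ∀ q ∈ K, v q ≤ w t₀ x₀ y₀ - ε * t₀ := fun q hq => hpmax hq
    -- time derivative nonneg
    have hwtlb : 0 ≤ wt t₀ x₀ y₀ - ε := by
      have hder : HasDerivAt (fun s => w s x₀ y₀ - ε * s) (wt t₀ x₀ y₀ - ε) t₀ := by
        exact ((hwt t₀ ht₀pos x₀ hx₀ y₀ hy₀).sub ((hasDerivAt_id t₀).const_mul ε)).congr_deriv (by simp)
      exact aux_time_deriv_nonneg hder ht₀pos ht₀.2
        (fun s hs => hmaxpt (s, x₀, y₀) ⟨hs, hx₀, hy₀⟩)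
    -- spatial max along x and y slices
    have hmx : ∀ a ∈ Icc 0 L₁, w t₀ a y₀ ≤ w t₀ x₀ y₀ := by
      intro a ha
      have := hmaxpt (t₀, a, y₀) ⟨ht₀, ha, hy₀⟩
      simp only [hv] at this; linarith
    have hmy : ∀ b ∈ Icc 0 L₂, w t₀ x₀ b ≤ w t₀ x₀ y₀ := by
      intro b hb
      have := hmaxpt (t₀, x₀, b) ⟨ht₀, hx₀, hb⟩
      simp only [hv] at this; linarith
    -- first derivatives vanish
    have hwx0 : wx t₀ x₀ y₀ = 0 := by
      rcases eq_or_lt_of_le hx₀.1 with h0 | h0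
      · rw [← h0]; exact (hneu₁ t₀ ht₀pos y₀ hy₀).1
      rcases eq_or_lt_of_le hx₀.2 with hL | hL
      · rw [hL]; exact (hneu₁ t₀ ht₀pos y₀ hy₀).2
      · have hloc : IsLocalMax (fun a => w t₀ a y₀) x₀ := by
          filter_upwards [Icc_mem_nhds h0 hL] with a ha using hmx a ha
        exact hloc.hasDerivAt_eq_zero (hwx t₀ ht₀pos x₀ hx₀ y₀ hy₀)
    have hwy0 : wy t₀ x₀ y₀ = 0 := by
      rcases eq_or_lt_of_le hy₀.1 with h0 | h0
      · rw [← h0]; exact (hneu₂ t₀ ht₀pos x₀ hx₀).1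
      rcases eq_or_lt_of_le hy₀.2 with hL | hL
      · rw [hL]; exact (hneu₂ t₀ ht₀pos x₀ hx₀).2
      · have hloc : IsLocalMax (fun b => w t₀ x₀ b) y₀ := by
          filter_upwards [Icc_mem_nhds h0 hL] with b hb using hmy b hb
        exact hloc.hasDerivAt_eq_zero (hwy t₀ ht₀pos x₀ hx₀ y₀ hy₀)
    -- second derivatives nonpos
    have hxx : wxx t₀ x₀ y₀ ≤ 0 :=
      aux_second_deriv_nonpos_s19 hL₁ (fun a ha => hwx t₀ ht₀pos a ha y₀ hy₀) hx₀
        (hwxx t₀ ht₀pos x₀ hx₀ y₀ hy₀) hwx0 hmx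
    have hyy : wyy t₀ x₀ y₀ ≤ 0 :=
      aux_second_deriv_nonpos_s19 hL₂ (fun b hb => hwy t₀ ht₀pos x₀ hx₀ b hb) hy₀
        (hwyy t₀ ht₀pos x₀ hx₀ y₀ hy₀) hwy0 hmy
    -- sign of w at the max
    have hwpos : 0 < w t₀ x₀ y₀ := by
      simp only [hv] at hcon
      nlinarith [mul_pos hε ht₀pos]
    have hpde' := hpde t₀ ht₀pos x₀ hx₀ y₀ hy₀
    rw [hwx0, hwy0, mul_zero, mul_zero, add_zero, add_zero] at hpde'
    have hA : (1 + k) * ε ≤ (1 + k) * wt t₀ x₀ y₀ :=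
      mul_le_mul_of_nonneg_left (by linarith) (by linarith)
    have hB : D * (wxx t₀ x₀ y₀ + wyy t₀ x₀ y₀) ≤ 0 :=
      mul_nonpos_of_nonneg_of_nonpos hD.le (by linarith)
    have hC : 0 ≤ ρ x₀ y₀ * w t₀ x₀ y₀ := mul_nonneg (hρ x₀ hx₀ y₀ hy₀) hwpos.le
    nlinarith [mul_pos (show (0:ℝ) < 1 + k by linarith) hε]
  -- ε → 0
  by_contra hgt
  push_neg at hgt
  have ht1 : (0:ℝ) < t + 1 := by linarith [ht.1]
  have hε : 0 < (w t x y - M) / (t + 1) := div_pos (by linarith) ht1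
  have h2 := key _ hε
  rw [div_mul_eq_mul_div] at h2
  have h3 : (w t x y - M) * t / (t + 1) < w t x y - M := by
    rw [div_lt_iff₀ ht1]; nlinarith [ht.1]
  linarith

/-- L∞ long-time decay for the adsorption–convection–diffusion–reaction equation
`(1+k)∂ₜc + u·∇c = DΔc − κc` on the rectangle `Ω = (0,L₁)×(0,L₂)` with divergence-free
velocity, no-penetration and no-flux boundary conditions, and reaction rate `κ ≥ κ₁ > 0`:
if `0 ≤ c(0,·) ≤ M₂` on `cl(Ω)`, then `0 ≤ c(t,·) ≤ M₂·exp(−κ₁·t/(1+k))` on `cl(Ω)` for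
all `t ≥ 0`.

Here `c t x y` is the concentration, `ct, cx, cy, cxx, cyy` are its partial derivatives
(first in time, first and second in each space variable), `u₁, u₂` the velocity components
with spatial derivatives `u₁x, u₂y`, `κ x y ≥ 0` the reaction rate, `k ≥ 0` the adsorption
coefficient and `D > 0` the diffusion coefficient. -/
theorem stmt_19 (L₁ L₂ k D M₂ κ₁ : ℝ) (hL₁ : 0 < L₁) (hL₂ : 0 < L₂)
    (hk : 0 ≤ k) (hD : 0 < D) (hM₂ : 0 ≤ M₂) (hκ₁ : 0 < κ₁)
    (κ : ℝ → ℝ → ℝ)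
    (hκcont : ContinuousOn (fun q : ℝ × ℝ => κ q.1 q.2) (Set.Icc 0 L₁ ×ˢ Set.Icc 0 L₂))
    (hκlb : ∀ x ∈ Set.Icc 0 L₁, ∀ y ∈ Set.Icc 0 L₂, κ₁ ≤ κ x y)
    (u₁ u₂ c ct cx cy cxx cyy u₁x u₂y : ℝ → ℝ → ℝ → ℝ)
    -- continuity of the velocity on `[0,∞) × cl(Ω)`
    (hu₁cont : ContinuousOn (fun q : ℝ × ℝ × ℝ => u₁ q.1 q.2.1 q.2.2)
      (Set.Ici 0 ×ˢ Set.Icc 0 L₁ ×ˢ Set.Icc 0 L₂))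
    (hu₂cont : ContinuousOn (fun q : ℝ × ℝ × ℝ => u₂ q.1 q.2.1 q.2.2)
      (Set.Ici 0 ×ˢ Set.Icc 0 L₁ ×ˢ Set.Icc 0 L₂))
    -- continuity of the concentration on `[0,∞) × cl(Ω)`
    (hccont : ContinuousOn (fun q : ℝ × ℝ × ℝ => c q.1 q.2.1 q.2.2)
      (Set.Ici 0 ×ˢ Set.Icc 0 L₁ ×ˢ Set.Icc 0 L₂))
    -- existence of the partial derivatives of `c` on `(0,∞) × cl(Ω)`
    (hct : ∀ t > (0:ℝ), ∀ x ∈ Set.Icc 0 L₁, ∀ y ∈ Set.Icc 0 L₂,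
      HasDerivAt (fun s => c s x y) (ct t x y) t)
    (hcx : ∀ t > (0:ℝ), ∀ x ∈ Set.Icc 0 L₁, ∀ y ∈ Set.Icc 0 L₂,
      HasDerivAt (fun a => c t a y) (cx t x y) x)
    (hcy : ∀ t > (0:ℝ), ∀ x ∈ Set.Icc 0 L₁, ∀ y ∈ Set.Icc 0 L₂,
      HasDerivAt (fun b => c t x b) (cy t x y) y)
    (hcxx : ∀ t > (0:ℝ), ∀ x ∈ Set.Icc 0 L₁, ∀ y ∈ Set.Icc 0 L₂,
      HasDerivAt (fun a => cx t a y) (cxx t x y) x)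
    (hcyy : ∀ t > (0:ℝ), ∀ x ∈ Set.Icc 0 L₁, ∀ y ∈ Set.Icc 0 L₂,
      HasDerivAt (fun b => cy t x b) (cyy t x y) y)
    -- continuity of the partial derivatives of `c` on `(0,∞) × cl(Ω)`
    (hctcont : ContinuousOn (fun q : ℝ × ℝ × ℝ => ct q.1 q.2.1 q.2.2)
      (Set.Ioi 0 ×ˢ Set.Icc 0 L₁ ×ˢ Set.Icc 0 L₂))
    (hcxcont : ContinuousOn (fun q : ℝ × ℝ × ℝ => cx q.1 q.2.1 q.2.2)
      (Set.Ioi 0 ×ˢ Set.Icc 0 L₁ ×ˢ Set.Icc 0 L₂))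
    (hcycont : ContinuousOn (fun q : ℝ × ℝ × ℝ => cy q.1 q.2.1 q.2.2)
      (Set.Ioi 0 ×ˢ Set.Icc 0 L₁ ×ˢ Set.Icc 0 L₂))
    (hcxxcont : ContinuousOn (fun q : ℝ × ℝ × ℝ => cxx q.1 q.2.1 q.2.2)
      (Set.Ioi 0 ×ˢ Set.Icc 0 L₁ ×ˢ Set.Icc 0 L₂))
    (hcyycont : ContinuousOn (fun q : ℝ × ℝ × ℝ => cyy q.1 q.2.1 q.2.2)
      (Set.Ioi 0 ×ˢ Set.Icc 0 L₁ ×ˢ Set.Icc 0 L₂))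
    -- spatial derivatives of the velocity on `(0,∞) × Ω`
    (hu₁x : ∀ t > (0:ℝ), ∀ x ∈ Set.Ioo 0 L₁, ∀ y ∈ Set.Ioo 0 L₂,
      HasDerivAt (fun a => u₁ t a y) (u₁x t x y) x)
    (hu₂y : ∀ t > (0:ℝ), ∀ x ∈ Set.Ioo 0 L₁, ∀ y ∈ Set.Ioo 0 L₂,
      HasDerivAt (fun b => u₂ t x b) (u₂y t x y) y)
    -- (i) incompressibility on `(0,∞) × Ω`
    (hdiv : ∀ t > (0:ℝ), ∀ x ∈ Set.Ioo 0 L₁, ∀ y ∈ Set.Ioo 0 L₂,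
      u₁x t x y + u₂y t x y = 0)
    -- (ii) the PDE on `(0,∞) × Ω`
    (hpde : ∀ t > (0:ℝ), ∀ x ∈ Set.Ioo 0 L₁, ∀ y ∈ Set.Ioo 0 L₂,
      (1 + k) * ct t x y + u₁ t x y * cx t x y + u₂ t x y * cy t x y =
        D * (cxx t x y + cyy t x y) - κ x y * c t x y)
    -- (iii) no-penetration and no-flux boundary conditions
    (hbc₁ : ∀ t > (0:ℝ), ∀ y ∈ Set.Icc 0 L₂,
      u₁ t 0 y = 0 ∧ u₁ t L₁ y = 0 ∧ cx t 0 y = 0 ∧ cx t L₁ y = 0)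
    (hbc₂ : ∀ t > (0:ℝ), ∀ x ∈ Set.Icc 0 L₁,
      u₂ t x 0 = 0 ∧ u₂ t x L₂ = 0 ∧ cy t x 0 = 0 ∧ cy t x L₂ = 0)
    -- (iv) bounds on the initial data
    (hinit : ∀ x ∈ Set.Icc 0 L₁, ∀ y ∈ Set.Icc 0 L₂, 0 ≤ c 0 x y ∧ c 0 x y ≤ M₂) :
    ∀ t, 0 ≤ t → ∀ x ∈ Set.Icc 0 L₁, ∀ y ∈ Set.Icc 0 L₂,
      0 ≤ c t x y ∧ c t x y ≤ M₂ * Real.exp (-κ₁ * t / (1 + k)) := by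
  intro t ht x hx y hy
  set lam : ℝ := κ₁ / (1 + k) with hlam
  have h1k : (0:ℝ) < 1 + k := by linarith
  have hlk : (1 + k) * lam = κ₁ := by rw [hlam]; field_simp
  rcases eq_or_lt_of_le ht with h0 | htpos
  · subst h0
    have h := hinit x hx y hy
    constructor
    · exact h.1
    · have : -κ₁ * 0 / (1 + k) = 0 := by ring
      rw [this, Real.exp_zero, mul_one]
      exact h.2
  · -- extend the PDE to the closed spatial domain by continuity
    have hpde' : ∀ s > (0:ℝ), ∀ a ∈ Set.Icc 0 L₁, ∀ b ∈ Set.Icc 0 L₂,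
        (1 + k) * ct s a b + u₁ s a b * cx s a b + u₂ s a b * cy s a b =
          D * (cxx s a b + cyy s a b) - κ a b * c s a b := by
      intro s hs a ha b hb
      set F : ℝ × ℝ × ℝ → ℝ := fun q =>
        (1 + k) * ct q.1 q.2.1 q.2.2 + u₁ q.1 q.2.1 q.2.2 * cx q.1 q.2.1 q.2.2
          + u₂ q.1 q.2.1 q.2.2 * cy q.1 q.2.1 q.2.2
          - (D * (cxx q.1 q.2.1 q.2.2 + cyy q.1 q.2.1 q.2.2)
              - κ q.2.1 q.2.2 * c q.1 q.2.1 q.2.2) with hF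
      have hsubI : (Set.Ioi (0:ℝ) ×ˢ Set.Icc 0 L₁ ×ˢ Set.Icc 0 L₂)
          ⊆ (Set.Ici 0 ×ˢ Set.Icc 0 L₁ ×ˢ Set.Icc 0 L₂) :=
        Set.prod_mono Set.Ioi_subset_Ici_self subset_rfl
      have hκ' : ContinuousOn (fun q : ℝ × ℝ × ℝ => κ q.2.1 q.2.2)
          (Set.Ioi 0 ×ˢ Set.Icc 0 L₁ ×ˢ Set.Icc 0 L₂) :=
        hκcont.comp continuous_snd.continuousOn (fun q hq => hq.2)
      have hFc : ContinuousOn F (Set.Ioi 0 ×ˢ Set.Icc 0 L₁ ×ˢ Set.Icc 0 L₂) := by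
        apply ContinuousOn.sub
        · exact ((continuousOn_const.mul hctcont).add
            ((hu₁cont.mono hsubI).mul hcxcont)).add ((hu₂cont.mono hsubI).mul hcycont)
        · exact (continuousOn_const.mul (hcxxcont.add hcyycont)).sub
            (hκ'.mul (hccont.mono hsubI))
      have hz := aux_pde_ext hL₁ hL₂ F hFc (fun q hq => by
        have h := hpde q.1 hq.1 q.2.1 hq.2.1 q.2.2 hq.2.2
        simp only [hF]
        linarith) hs ha hb
      simp only [hF] at hz
      linarith
    -- the substituted function w = exp(lam t) c and its derivatives
    have hwcont : ContinuousOn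
        (fun q : ℝ × ℝ × ℝ => Real.exp (lam * q.1) * c q.1 q.2.1 q.2.2)
        (Set.Icc 0 t ×ˢ Set.Icc 0 L₁ ×ˢ Set.Icc 0 L₂) :=
      ((Real.continuous_exp.comp (continuous_const.mul continuous_fst)).continuousOn).mul
        (hccont.mono (Set.prod_mono Set.Icc_subset_Ici_self subset_rfl))
    have hexps : ∀ s : ℝ, HasDerivAt (fun r => Real.exp (lam * r))
        (Real.exp (lam * s) * lam) s := by
      intro s
      simpa using ((hasDerivAt_id s).const_mul lam).exp
    have hwt : ∀ s > (0:ℝ), ∀ a ∈ Set.Icc 0 L₁, ∀ b ∈ Set.Icc 0 L₂,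
        HasDerivAt (fun r => Real.exp (lam * r) * c r a b)
          (Real.exp (lam * s) * lam * c s a b + Real.exp (lam * s) * ct s a b) s :=
      fun s hs a ha b hb => (hexps s).mul (hct s hs a ha b hb)
    have hwx : ∀ s > (0:ℝ), ∀ a ∈ Set.Icc 0 L₁, ∀ b ∈ Set.Icc 0 L₂,
        HasDerivAt (fun a => Real.exp (lam * s) * c s a b)
          (Real.exp (lam * s) * cx s a b) a :=
      fun s hs a ha b hb => (hcx s hs a ha b hb).const_mul _
    have hwy : ∀ s > (0:ℝ), ∀ a ∈ Set.Icc 0 L₁, ∀ b ∈ Set.Icc 0 L₂,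
        HasDerivAt (fun b => Real.exp (lam * s) * c s a b)
          (Real.exp (lam * s) * cy s a b) b :=
      fun s hs a ha b hb => (hcy s hs a ha b hb).const_mul _
    have hwxx : ∀ s > (0:ℝ), ∀ a ∈ Set.Icc 0 L₁, ∀ b ∈ Set.Icc 0 L₂,
        HasDerivAt (fun a => Real.exp (lam * s) * cx s a b)
          (Real.exp (lam * s) * cxx s a b) a :=
      fun s hs a ha b hb => (hcxx s hs a ha b hb).const_mul _
    have hwyy : ∀ s > (0:ℝ), ∀ a ∈ Set.Icc 0 L₁, ∀ b ∈ Set.Icc 0 L₂,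
        HasDerivAt (fun b => Real.exp (lam * s) * cy s a b)
          (Real.exp (lam * s) * cyy s a b) b :=
      fun s hs a ha b hb => (hcyy s hs a ha b hb).const_mul _
    have hρ : ∀ a ∈ Set.Icc 0 L₁, ∀ b ∈ Set.Icc 0 L₂, 0 ≤ κ a b - κ₁ :=
      fun a ha b hb => by linarith [hκlb a ha b hb]
    have hwpde : ∀ s > (0:ℝ), ∀ a ∈ Set.Icc 0 L₁, ∀ b ∈ Set.Icc 0 L₂,
        (1 + k) * (Real.exp (lam * s) * lam * c s a b + Real.exp (lam * s) * ct s a b)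
          + u₁ s a b * (Real.exp (lam * s) * cx s a b)
          + u₂ s a b * (Real.exp (lam * s) * cy s a b) =
        D * (Real.exp (lam * s) * cxx s a b + Real.exp (lam * s) * cyy s a b)
          - (κ a b - κ₁) * (Real.exp (lam * s) * c s a b) := by
      intro s hs a ha b hb
      have h := hpde' s hs a ha b hb
      linear_combination Real.exp (lam * s) * h + Real.exp (lam * s) * c s a b * hlk
    have hepos := Real.exp_pos (lam * t)
    constructor
    · -- lower bound via the minimum principle (max principle for -w)
      have hW2 := aux_max_principle L₁ L₂ t k D 0 hL₁ hL₂ hk hD le_rfl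
        (fun a b => κ a b - κ₁) hρ u₁ u₂
        (fun s a b => -(Real.exp (lam * s) * c s a b))
        (fun s a b => -(Real.exp (lam * s) * lam * c s a b
          + Real.exp (lam * s) * ct s a b))
        (fun s a b => -(Real.exp (lam * s) * cx s a b))
        (fun s a b => -(Real.exp (lam * s) * cy s a b))
        (fun s a b => -(Real.exp (lam * s) * cxx s a b))
        (fun s a b => -(Real.exp (lam * s) * cyy s a b))
        hwcont.neg
        (fun s hs a ha b hb => (hwt s hs a ha b hb).neg)
        (fun s hs a ha b hb => (hwx s hs a ha b hb).neg)
        (fun s hs a ha b hb => (hwy s hs a ha b hb).neg)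
        (fun s hs a ha b hb => (hwxx s hs a ha b hb).neg)
        (fun s hs a ha b hb => (hwyy s hs a ha b hb).neg)
        (fun s hs a ha b hb => by
          have h := hwpde s hs a ha b hb
          linarith)
        (fun s hs b hb => by
          have h := hbc₁ s hs b hb
          rw [h.2.2.1, h.2.2.2, mul_zero, neg_zero]
          exact ⟨rfl, rfl⟩)
        (fun s hs a ha => by
          have h := hbc₂ s hs a ha
          rw [h.2.2.1, h.2.2.2, mul_zero, neg_zero]
          exact ⟨rfl, rfl⟩)
        (fun a ha b hb => by
          have h := (hinit a ha b hb).1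
          simp only [mul_zero, Real.exp_zero, one_mul]
          linarith)
        t ⟨ht, le_refl t⟩ x hx y hy
      have hW2' : -(Real.exp (lam * t) * c t x y) ≤ 0 := hW2
      by_contra hneg
      push_neg at hneg
      nlinarith [mul_pos hepos (neg_pos.2 hneg)]
    · -- upper bound via the maximum principle
      have hW := aux_max_principle L₁ L₂ t k D M₂ hL₁ hL₂ hk hD hM₂
        (fun a b => κ a b - κ₁) hρ u₁ u₂
        (fun s a b => Real.exp (lam * s) * c s a b)
        (fun s a b => Real.exp (lam * s) * lam * c s a b + Real.exp (lam * s) * ct s a b)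
        (fun s a b => Real.exp (lam * s) * cx s a b)
        (fun s a b => Real.exp (lam * s) * cy s a b)
        (fun s a b => Real.exp (lam * s) * cxx s a b)
        (fun s a b => Real.exp (lam * s) * cyy s a b)
        hwcont hwt hwx hwy hwxx hwyy hwpde
        (fun s hs b hb => by
          have h := hbc₁ s hs b hb
          rw [h.2.2.1, h.2.2.2, mul_zero]
          exact ⟨rfl, rfl⟩)
        (fun s hs a ha => by
          have h := hbc₂ s hs a ha
          rw [h.2.2.1, h.2.2.2, mul_zero]
          exact ⟨rfl, rfl⟩)
        (fun a ha b hb => by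
          have h := (hinit a ha b hb).2
          simp only [mul_zero, Real.exp_zero, one_mul]
          exact h)
        t ⟨ht, le_refl t⟩ x hx y hy
      have hW' : Real.exp (lam * t) * c t x y ≤ M₂ := hW
      have harg : -κ₁ * t / (1 + k) = -(lam * t) := by rw [hlam]; ring
      rw [harg, Real.exp_neg, ← div_eq_mul_inv, le_div_iff₀ (Real.exp_pos _), mul_comm]
      exact hW'
end
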